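/- Let σ > 0, ε > 0 and d ≠ 0 be real numbers, and let g : ℝ → ℝ be continuous on the closed interval [−ε, ε], twice differentiable on the open interval (−ε, ε), and satisfy d · g'(x) + (σ²/2) · g''(x) = −1 for all x ∈ (−ε, ε) together with the boundary conditions g(−ε) = g(ε) = 0. Then g(0) = (ε/d) · tanh(ε·d/σ²). -/

import Mathlib

open Set

/-- A function with zero derivative on an open interval is constant there. -/
lemma aux_const_of_deriv_zero {a b : ℝ} {F : ℝ → ℝ}
    (h : ∀ x ∈ Set.Ioo a b, HasDerivAt F 0 x)
    {x y : ℝ} (hx : x ∈ Set.Ioo a b) (hy : y ∈ Set.Ioo a b) (hxy : x < y) : F x = F y := by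
  obtain ⟨c, _, hc0⟩ := exists_hasDerivAt_eq_slope F (fun _ => 0) hxy
    (fun z hz => (h z ⟨lt_of_lt_of_le hx.1 hz.1, lt_of_le_of_lt hz.2 hy.2⟩).continuousAt.continuousWithinAt)
    (fun z hz => h z ⟨hx.1.trans hz.1, hz.2.trans hy.2⟩)
  have : (F y - F x) / (y - x) = 0 := hc0.symm
  have hne : y - x ≠ 0 := sub_ne_zero.2 hxy.ne'
  field_simp at this
  linarith

/-- The boundary-value problem `d·g' + (σ²/2)·g'' = −1` on `(−ε, ε)` with `g(±ε) = 0`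
(mean first exit time of a Brownian motion with drift `d ≠ 0` and diffusion rate `σ`)
satisfies `g(0) = (ε/d)·tanh(ε·d/σ²)`. -/
theorem mfet_drift_ode (σ ε d : ℝ) (hσ : 0 < σ) (hε : 0 < ε) (hd : d ≠ 0)
    (g g' g'' : ℝ → ℝ)
    (hcont : ContinuousOn g (Set.Icc (-ε) ε))
    (hderiv1 : ∀ x ∈ Set.Ioo (-ε) ε, HasDerivAt g (g' x) x)
    (hderiv2 : ∀ x ∈ Set.Ioo (-ε) ε, HasDerivAt g' (g'' x) x)
    (hode : ∀ x ∈ Set.Ioo (-ε) ε, d * g' x + σ ^ 2 / 2 * g'' x = -1)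
    (hbc_lo : g (-ε) = 0) (hbc_hi : g ε = 0) :
    g 0 = ε / d * Real.tanh (ε * d / σ ^ 2) := by
  have hσ2 : σ ^ 2 ≠ 0 := pow_ne_zero _ hσ.ne'
  set k : ℝ := 2 * d / σ ^ 2 with hk
  have hkne : k ≠ 0 := by
    rw [hk]; exact div_ne_zero (by simpa using hd) hσ2
  have h0mem : (0 : ℝ) ∈ Set.Ioo (-ε) ε := ⟨by linarith, hε⟩
  -- Step 1: F x = (g' x + 1/d) * exp(k x) has zero derivative on Ioo
  set F : ℝ → ℝ := fun x => (g' x + 1/d) * Real.exp (k * x) with hF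
  have hFd : ∀ x ∈ Set.Ioo (-ε) ε, HasDerivAt F 0 x := by
    intro x hx
    have hexp : HasDerivAt (fun x => Real.exp (k * x)) (Real.exp (k * x) * k) x := by
      simpa using ((hasDerivAt_id x).const_mul k).exp
    have h1 : HasDerivAt F (g'' x * Real.exp (k * x) + (g' x + 1/d) * (Real.exp (k * x) * k)) x :=
      ((hderiv2 x hx).add_const (1/d)).mul hexp
    convert h1 using 1
    have hode' := hode x hx
    have hgxx : g'' x = (-1 - d * g' x) * (2 / σ ^ 2) := by
      field_simp
      linarith
    rw [hgxx, hk]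
    field_simp
    ring
  set B : ℝ := g' 0 + 1/d with hB
  have hFval : ∀ x ∈ Set.Ioo (-ε) ε, g' x + 1/d = B * Real.exp (-(k * x)) := by
    intro x hx
    have hfx : F x = F 0 := by
      rcases lt_trichotomy x 0 with h | h | h
      · exact aux_const_of_deriv_zero hFd hx h0mem h
      · rw [h]
      · exact (aux_const_of_deriv_zero hFd h0mem hx h).symm
    have : (g' x + 1/d) * Real.exp (k * x) = B := by
      simpa [hF, hB] using hfx
    rw [Real.exp_neg, ← this, mul_inv_cancel_right₀ (Real.exp_ne_zero _)]
  -- Step 2: G x = g x + x/d + (B/k) exp(-k x) has zero derivative on Ioo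
  set G : ℝ → ℝ := fun x => g x + x / d + B / k * Real.exp (-(k * x)) with hG
  have hGd : ∀ x ∈ Set.Ioo (-ε) ε, HasDerivAt G 0 x := by
    intro x hx
    have hexp : HasDerivAt (fun x => Real.exp (-(k * x))) (Real.exp (-(k * x)) * -k) x := by
      simpa using (((hasDerivAt_id x).const_mul k).neg).exp
    have h1 : HasDerivAt G (g' x + 1/d + B / k * (Real.exp (-(k * x)) * -k)) x := by
      have := ((hderiv1 x hx).add ((hasDerivAt_id x).div_const d)).add (hexp.const_mul (B / k))
      exact this
    convert h1 using 1
    have hv := hFval x hx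
    have h2 : B / k * (Real.exp (-(k * x)) * -k) = -(B * Real.exp (-(k * x))) := by
      field_simp
    rw [h2, ← hv]
    ring
  have hGcont : ContinuousOn G (Set.Icc (-ε) ε) := by
    apply ContinuousOn.add
    apply ContinuousOn.add hcont
    · exact (continuous_id.div_const d).continuousOn
    · exact Continuous.continuousOn (by fun_prop)
  -- G ε = G 0
  have hGe : G ε = G 0 := by
    have := constant_of_has_deriv_right_zero (f := G) (a := 0) (b := ε)
      (hGcont.mono (Set.Icc_subset_Icc (by linarith) le_rfl))
      (fun x hx => (hGd x ⟨by linarith [hx.1], hx.2⟩).hasDerivWithinAt)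
    exact this ε (Set.right_mem_Icc.2 hε.le)
  -- G (-ε) = G 0  via reflection
  have hGne : G (-ε) = G 0 := by
    have hH := constant_of_has_deriv_right_zero (f := fun x => G (-x)) (a := 0) (b := ε)
      (hGcont.comp continuous_neg.continuousOn (fun x hx => by
        simp only [Set.mem_Icc] at hx ⊢
        constructor <;> linarith [hx.1, hx.2]))
      (fun x hx => by
        have hmem : -x ∈ Set.Ioo (-ε) ε := ⟨by linarith [hx.2], by linarith [hx.1]⟩
        have := ((hGd (-x) hmem).comp x (hasDerivAt_neg x)).hasDerivWithinAt (s := Set.Ici x)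
        rw [zero_mul] at this
        exact this)
    have := hH ε (Set.right_mem_Icc.2 hε.le)
    simpa using this
  -- Final algebra
  set t : ℝ := ε * d / σ ^ 2 with ht
  have hkt : k * ε = 2 * t := by rw [hk, ht]; ring
  have htne : t ≠ 0 := by
    rw [ht]; exact div_ne_zero (mul_ne_zero hε.ne' hd) hσ2
  set u : ℝ := Real.exp t with hu
  have hupos : 0 < u := Real.exp_pos t
  have hune1 : u ≠ 1 := by
    rw [hu]; simpa [Real.exp_eq_one_iff] using htne
  have hu2 : u * u ≠ 1 := by
    intro h
    have : u = 1 := by nlinarith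
    exact hune1 this
  have hexppos : Real.exp (k * ε) = u * u := by
    rw [hkt, hu, ← Real.exp_add]; ring_nf
  have hexpneg : Real.exp (-(k * ε)) = 1 / (u * u) := by
    rw [Real.exp_neg, hexppos]; field_simp
  have hexpneg' : Real.exp (-(k * -ε)) = u * u := by
    rw [show -(k * -ε) = k * ε by ring, hexppos]
  have eqn1 : ε / d + B / k * (1 / (u * u)) = g 0 + B / k := by
    have h1 : g ε + ε / d + B / k * Real.exp (-(k * ε)) = g 0 + 0 / d + B / k * Real.exp (-(k * 0)) := hGe
    rw [hbc_hi, hexpneg] at h1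
    simpa using h1
  have eqn2 : -ε / d + B / k * (u * u) = g 0 + B / k := by
    have h1 : g (-ε) + (-ε) / d + B / k * Real.exp (-(k * -ε)) = g 0 + 0 / d + B / k * Real.exp (-(k * 0)) := hGne
    rw [hbc_lo, hexpneg'] at h1
    simpa using h1
  have hsinh : Real.sinh t = (u - 1/u) / 2 := by
    rw [Real.sinh_eq, Real.exp_neg, ← hu, one_div]
  have hcosh : Real.cosh t = (u + 1/u) / 2 := by
    rw [Real.cosh_eq, Real.exp_neg, ← hu, one_div]
  have htanh : Real.tanh t = (u - 1/u) / (u + 1/u) := by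
    rw [Real.tanh_eq_sinh_div_cosh, hsinh, hcosh, div_div_div_comm]
    norm_num
  rw [htanh]
  obtain ⟨c, hcc⟩ : ∃ c : ℝ, B / k = c := ⟨B / k, rfl⟩
  rw [hcc] at eqn1 eqn2
  clear_value u
  have hune0 : u ≠ 0 := hupos.ne'
  have huu : u * u ≠ 0 := mul_ne_zero hune0 hune0
  have hdiff : u * u - 1 ≠ 0 := sub_ne_zero.2 hu2
  have hdiff4 : (u * u) * (u * u) - 1 ≠ 0 := by
    intro h
    have h1 : (u * u) * (u * u) = 1 := by linarith
    rcases mul_self_eq_one_iff.1 h1 with h2 | h2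
    · exact hu2 h2
    · nlinarith
  have hsum2 : u + 1 / u ≠ 0 := by positivity
  have h : ε / d + c * (1 / (u * u)) = -ε / d + c * (u * u) := by linarith [eqn1, eqn2]
  have hc2 : c * ((u * u) * (u * u) - 1) * d ^ 2 = 2 * ε * (u * u) * d := by
    field_simp at h
    linear_combination -d * h
  have hcv : c * (((u * u) * (u * u) - 1) * d) = 2 * ε * (u * u) := by
    apply mul_right_cancel₀ hd
    linear_combination hc2
  have hg0 : g 0 = ε / d + c * (1 / (u * u)) - c := by linarith [eqn1]
  rw [hg0]
  field_simp
  linear_combination -hcv
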